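/- The fractional chromatic number of the Moser spindle equals 7/2. -/
import Mathlib

set_option maxRecDepth 10000

/-- The Moser spindle: vertices `{0,…,6}`, edges
`{01,02,12,13,23,34,45,35,46,56,06,16}`. -/
def moser : SimpleGraph (Fin 7) :=
  SimpleGraph.fromEdgeSet
    {s(0,1), s(0,2), s(1,2), s(1,3), s(2,3), s(3,4), s(4,5), s(3,5),
     s(4,6), s(5,6), s(0,6), s(1,6)}

/-- A fractional coloring of a finite graph `G` assigns nonnegative weights to
(independent) finsets of vertices so that every vertex is covered by total
weight at least 1.  `fracChromNum G` is the infimum of the total weight. -/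
noncomputable def fracChromNum {V : Type*} [Fintype V] [DecidableEq V]
    (G : SimpleGraph V) : ℝ :=
  sInf {t : ℝ | ∃ w : Finset V → ℝ,
    (∀ S, 0 ≤ w S) ∧
    (∀ S, w S ≠ 0 → ∀ u ∈ S, ∀ v ∈ S, ¬ G.Adj u v) ∧
    (∀ v : V, 1 ≤ ∑ S ∈ Finset.univ.filter (fun S => v ∈ S), w S) ∧
    (∑ S : Finset V, w S = t)}

instance moserDec : DecidableRel moser.Adj := fun a b =>
  decidable_of_iff' _ (by rw [moser, SimpleGraph.fromEdgeSet_adj])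

/-- Every independent set in the Moser spindle has at most 2 vertices. -/
lemma moser_indep_card : ∀ S : Finset (Fin 7),
    (∀ u ∈ S, ∀ v ∈ S, ¬ moser.Adj u v) → S.card ≤ 2 := by decide

/-- A Hamiltonian cycle of the complement, as a family of 7 independent pairs
covering each vertex exactly twice. -/
def moserT : Finset (Finset (Fin 7)) :=
  {{0,3},{3,6},{2,6},{2,4},{1,4},{1,5},{0,5}}

lemma moserT_card : moserT.card = 7 := by decide

lemma moserT_cover : ∀ v : Fin 7, (moserT.filter (fun S => v ∈ S)).card = 2 := by decide

lemma moserT_indep : ∀ S ∈ moserT, ∀ u ∈ S, ∀ v ∈ S, ¬ moser.Adj u v := by decide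

/-- The witnessing weight function: `1/2` on each of the 7 chosen pairs. -/
noncomputable def moserW : Finset (Fin 7) → ℝ := fun S => if S ∈ moserT then 1/2 else 0

/-- The fractional chromatic number of the Moser spindle equals `7/2`. -/
theorem moser_fracChromNum : fracChromNum moser = 7 / 2 := by
  have hmem : (7/2 : ℝ) ∈ {t : ℝ | ∃ w : Finset (Fin 7) → ℝ,
      (∀ S, 0 ≤ w S) ∧
      (∀ S, w S ≠ 0 → ∀ u ∈ S, ∀ v ∈ S, ¬ moser.Adj u v) ∧
      (∀ v, 1 ≤ ∑ S ∈ Finset.univ.filter (fun S => v ∈ S), w S) ∧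
      (∑ S : Finset (Fin 7), w S = 7/2)} := by
    refine ⟨moserW, fun S => by unfold moserW; positivity, ?_, ?_, ?_⟩
    · intro S hS
      have : S ∈ moserT := by by_contra h; exact hS (by simp [moserW, h])
      exact moserT_indep S this
    · intro v
      have : ∑ S ∈ Finset.univ.filter (fun S => v ∈ S), moserW S
          = ∑ S ∈ (Finset.univ.filter (fun S => v ∈ S)) ∩ moserT, (1/2 : ℝ) := by
        rw [← Finset.sum_ite_mem]; rfl
      rw [this, Finset.sum_const]
      have : (Finset.univ.filter (fun S => v ∈ S)) ∩ moserT
          = moserT.filter (fun S => v ∈ S) := by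
        ext S; simp [Finset.mem_filter, and_comm]
      rw [this, moserT_cover v]
      norm_num
    · have : ∑ S : Finset (Fin 7), moserW S = ∑ S ∈ Finset.univ ∩ moserT, (1/2 : ℝ) := by
        rw [← Finset.sum_ite_mem]; rfl
      rw [this, Finset.univ_inter, Finset.sum_const, moserT_card]
      norm_num
  have hlb : ∀ t ∈ {t : ℝ | ∃ w : Finset (Fin 7) → ℝ,
      (∀ S, 0 ≤ w S) ∧
      (∀ S, w S ≠ 0 → ∀ u ∈ S, ∀ v ∈ S, ¬ moser.Adj u v) ∧
      (∀ v, 1 ≤ ∑ S ∈ Finset.univ.filter (fun S => v ∈ S), w S) ∧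
      (∑ S : Finset (Fin 7), w S = t)}, (7/2 : ℝ) ≤ t := by
    rintro t ⟨w, hpos, hind, hcov, hsum⟩
    have key : (7 : ℝ) ≤ ∑ S : Finset (Fin 7), (S.card : ℝ) * w S := by
      calc (7:ℝ) = ∑ v : Fin 7, (1:ℝ) := by simp
        _ ≤ ∑ v : Fin 7, ∑ S ∈ Finset.univ.filter (fun S => v ∈ S), w S :=
            Finset.sum_le_sum (fun v _ => hcov v)
        _ = ∑ S : Finset (Fin 7), (S.card : ℝ) * w S := by
            simp only [Finset.sum_filter]
            rw [Finset.sum_comm]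
            congr 1
            ext S
            rw [Finset.sum_ite_mem, Finset.univ_inter, Finset.sum_const, nsmul_eq_mul]
    have : ∑ S : Finset (Fin 7), (S.card : ℝ) * w S ≤ ∑ S : Finset (Fin 7), 2 * w S := by
      apply Finset.sum_le_sum
      intro S _
      by_cases h : w S = 0
      · simp [h]
      · have := moser_indep_card S (hind S h)
        have h2 : (S.card : ℝ) ≤ 2 := by exact_mod_cast this
        exact mul_le_mul_of_nonneg_right h2 (hpos S)
    rw [← Finset.mul_sum, hsum] at this
    linarith [le_trans key this]
  refine le_antisymm (csInf_le ⟨7/2, hlb⟩ hmem) (le_csInf ⟨7/2, hmem⟩ hlb)
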